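/- Let S be a nonempty metric space with metric d_S that is nowhere locally compact (no point of S has a compact neighborhood), and let X = S × ℝ be equipped with the metric d((s₁, α₁), (s₂, α₂)) = d_S(s₁, s₂) + d_d(α₁, α₂), where d_d is the discrete metric on ℝ (d_d(α, β) = 0 if α = β and d_d(α, β) = 1 otherwise). Then the set of bounded continuous real-valued functions on X that are nowhere locally uniformly continuous is not a Borel subset of the space C_b(X) of bounded continuous real-valued functions on X equipped with the supremum norm. -/

import Mathlib

open MeasureTheory

/-- The product `S × ℝ`, to be equipped with the metric
`d((s₁,α₁),(s₂,α₂)) = d_S(s₁,s₂) + d_d(α₁,α₂)` where `d_d` is the discrete metric on `ℝ`. -/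
structure SumDiscreteProd (S : Type*) where
  fst : S
  snd : ℝ

/-- The metric `d_S(s₁,s₂) + d_d(α₁,α₂)`, where `d_d` is the discrete metric on `ℝ`. -/
noncomputable def sdDist {S : Type*} [MetricSpace S] (p q : SumDiscreteProd S) : ℝ :=
  dist p.fst q.fst + (if p.snd = q.snd then 0 else 1)

theorem sdDist_self {S : Type*} [MetricSpace S] (p : SumDiscreteProd S) : sdDist p p = 0 := by
  simp [sdDist]

theorem sdDist_comm {S : Type*} [MetricSpace S] (p q : SumDiscreteProd S) :
    sdDist p q = sdDist q p := by
  simp only [sdDist, dist_comm p.fst q.fst, eq_comm]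

theorem sdDist_triangle {S : Type*} [MetricSpace S] (p q r : SumDiscreteProd S) :
    sdDist p r ≤ sdDist p q + sdDist q r := by
  have key : ∀ a b c : ℝ, (if a = c then (0:ℝ) else 1) ≤
      (if a = b then (0:ℝ) else 1) + (if b = c then (0:ℝ) else 1) := by
    intro a b c
    by_cases hab : a = b <;> by_cases hbc : b = c <;>
      simp [hab, hbc] <;> (try split) <;> norm_num
  have h1 : dist p.fst r.fst ≤ dist p.fst q.fst + dist q.fst r.fst := dist_triangle _ _ _
  have h2 := key p.snd q.snd r.snd
  simp only [sdDist]
  linarith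

theorem sdDist_eq_zero {S : Type*} [MetricSpace S] {p q : SumDiscreteProd S}
    (h : sdDist p q = 0) : p = q := by
  simp only [sdDist] at h
  have h1 : (0:ℝ) ≤ dist p.fst q.fst := dist_nonneg
  have h2 : (0:ℝ) ≤ (if p.snd = q.snd then (0:ℝ) else 1) := by positivity
  have hfst : dist p.fst q.fst = 0 := by linarith
  have hsnd : (if p.snd = q.snd then (0:ℝ) else 1) = 0 := by linarith
  have hs : p.snd = q.snd := by by_contra hc; simp [hc] at hsnd
  have hf : p.fst = q.fst := by rwa [dist_eq_zero] at hfst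
  cases p; cases q; simp_all

noncomputable instance SumDiscreteProd.metricSpace (S : Type*) [MetricSpace S] :
    MetricSpace (SumDiscreteProd S) where
  dist := sdDist
  dist_self := sdDist_self
  dist_comm := sdDist_comm
  dist_triangle := sdDist_triangle
  eq_of_dist_eq_zero := sdDist_eq_zero



open Set Metric Filter

section BumpMachinery

variable {S : Type*} [MetricSpace S] {ι : Type*}

/-- A single bump function centered at `c` with radius `ρ`. -/
noncomputable def sdBump (c : S) (ρ : ℝ) (t : S) : ℝ := max 0 (1 - dist t c / ρ)

lemma sdBump_nonneg (c : S) (ρ : ℝ) (t : S) : 0 ≤ sdBump c ρ t := le_max_left _ _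

lemma sdBump_le_one (c : S) {ρ : ℝ} (hρ : 0 < ρ) (t : S) : sdBump c ρ t ≤ 1 := by
  apply max_le (by norm_num)
  have : 0 ≤ dist t c / ρ := div_nonneg dist_nonneg hρ.le
  linarith

lemma sdBump_self (c : S) {ρ : ℝ} (hρ : 0 < ρ) : sdBump c ρ c = 1 := by
  simp [sdBump]

lemma sdBump_eq_zero (c : S) {ρ : ℝ} (hρ : 0 < ρ) {t : S} (h : ρ ≤ dist t c) :
    sdBump c ρ t = 0 := by
  have h1 : (1 : ℝ) ≤ dist t c / ρ := (one_le_div hρ).2 h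
  simp only [sdBump]
  apply max_eq_left; linarith

lemma sdBump_sub_le (c : S) {ρ : ℝ} (hρ : 0 < ρ) (a b : S) :
    |sdBump c ρ a - sdBump c ρ b| ≤ dist a b / ρ := by
  have h1 : |sdBump c ρ a - sdBump c ρ b| ≤ |(1 - dist a c / ρ) - (1 - dist b c / ρ)| := by
    simpa [sdBump, max_comm] using
      abs_max_sub_max_le_abs (1 - dist a c / ρ) (1 - dist b c / ρ) 0
  have h2 : (1 - dist a c / ρ) - (1 - dist b c / ρ) = (dist b c - dist a c) / ρ := by ring
  rw [h2, abs_div, abs_of_pos hρ] at h1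
  refine h1.trans ?_
  gcongr
  rw [abs_sub_comm]
  exact abs_dist_sub_le a b c

/-- Supremum of a family of bumps. -/
noncomputable def bfn (z : ι → S) (ρ : ι → ℝ) (t : S) : ℝ :=
  sSup (insert 0 (range fun i => sdBump (z i) (ρ i) t))

variable {z : ι → S} {ρ : ι → ℝ}

lemma bfn_bddAbove (hρ : ∀ i, 0 < ρ i) (t : S) :
    ∀ v ∈ insert 0 (range fun i => sdBump (z i) (ρ i) t), v ≤ 1 := by
  rintro v (rfl | ⟨i, rfl⟩)
  · norm_num
  · exact sdBump_le_one _ (hρ i) t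

lemma bfn_le_one (hρ : ∀ i, 0 < ρ i) (t : S) : bfn z ρ t ≤ 1 :=
  csSup_le (by simp) (bfn_bddAbove hρ t)

lemma bfn_nonneg (hρ : ∀ i, 0 < ρ i) (t : S) : 0 ≤ bfn z ρ t :=
  le_csSup ⟨1, fun v hv => bfn_bddAbove hρ t v hv⟩ (mem_insert _ _)

lemma bfn_center (hρ : ∀ i, 0 < ρ i) (i : ι) : bfn z ρ (z i) = 1 := by
  apply le_antisymm (bfn_le_one hρ _)
  apply le_csSup ⟨1, fun v hv => bfn_bddAbove hρ _ v hv⟩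
  right
  exact ⟨i, sdBump_self _ (hρ i)⟩

lemma bfn_eq_zero (hρ : ∀ i, 0 < ρ i) {t : S} (h : ∀ i, ρ i ≤ dist t (z i)) :
    bfn z ρ t = 0 := by
  apply le_antisymm
  · apply csSup_le (by simp)
    rintro v (rfl | ⟨i, rfl⟩)
    · exact le_refl 0
    · show sdBump (z i) (ρ i) t ≤ 0
      exact le_of_eq (sdBump_eq_zero _ (hρ i) (h i))
  · exact bfn_nonneg hρ t

lemma bfn_locLip (hρ : ∀ i, 0 < ρ i)
    (hlf : ∀ t : S, ∃ η > 0, {i | dist t (z i) < η + ρ i}.Finite) (t : S) :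
    ∃ η > 0, ∃ L : ℝ, 0 ≤ L ∧
      ∀ a ∈ ball t η, ∀ b ∈ ball t η, |bfn z ρ a - bfn z ρ b| ≤ L * dist a b := by
  obtain ⟨η, ηpos, hfin⟩ := hlf t
  classical
  refine ⟨η / 2, by linarith, ∑ i ∈ hfin.toFinset, (ρ i)⁻¹, ?_, ?_⟩
  · exact Finset.sum_nonneg fun i _ => (inv_pos.2 (hρ i)).le
  have hout : ∀ a ∈ ball t (η / 2), ∀ i, i ∉ hfin.toFinset → sdBump (z i) (ρ i) a = 0 := by
    intro a ha i hi
    simp only [Set.Finite.mem_toFinset, mem_setOf_eq, not_lt] at hi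
    apply sdBump_eq_zero _ (hρ i)
    have h1 : dist t (z i) ≤ dist t a + dist a (z i) := dist_triangle _ _ _
    have h2 : dist t a < η / 2 := by rwa [dist_comm, ← mem_ball]
    linarith
  set L := ∑ i ∈ hfin.toFinset, (ρ i)⁻¹ with hL
  have hLi : ∀ i ∈ hfin.toFinset, (ρ i)⁻¹ ≤ L := by
    intro i hi
    exact Finset.single_le_sum (fun j _ => (inv_pos.2 (hρ j)).le) hi
  have key : ∀ a ∈ ball t (η / 2), ∀ b ∈ ball t (η / 2),
      bfn z ρ a ≤ bfn z ρ b + L * dist a b := by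
    intro a ha b hb
    apply csSup_le (by simp)
    rintro v (rfl | ⟨i, rfl⟩)
    · have := bfn_nonneg hρ (z := z) (ρ := ρ) b
      have : 0 ≤ L * dist a b := mul_nonneg (Finset.sum_nonneg fun i _ => (inv_pos.2 (hρ i)).le)
        dist_nonneg
      linarith [bfn_nonneg hρ (z := z) (ρ := ρ) b]
    · by_cases hi : i ∈ hfin.toFinset
      · show sdBump (z i) (ρ i) a ≤ _
        have h1 : sdBump (z i) (ρ i) a - sdBump (z i) (ρ i) b ≤ dist a b / ρ i :=
          (abs_le.1 (sdBump_sub_le _ (hρ i) a b)).2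
        have h2 : sdBump (z i) (ρ i) b ≤ bfn z ρ b :=
          le_csSup ⟨1, fun v hv => bfn_bddAbove hρ _ v hv⟩ (by right; exact ⟨i, rfl⟩)
        have h3 : dist a b / ρ i ≤ L * dist a b := by
          rw [div_eq_inv_mul]
          exact mul_le_mul_of_nonneg_right (hLi i hi) dist_nonneg
        linarith
      · show sdBump (z i) (ρ i) a ≤ _
        rw [hout a ha i hi]
        have : 0 ≤ L * dist a b := mul_nonneg (Finset.sum_nonneg fun i _ => (inv_pos.2 (hρ i)).le)
          dist_nonneg
        linarith [bfn_nonneg hρ (z := z) (ρ := ρ) b]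
  intro a ha b hb
  rw [abs_sub_le_iff]
  constructor
  · have := key a ha b hb; linarith
  · have := key b hb a ha; rw [dist_comm] at this; linarith

lemma bfn_continuous (hρ : ∀ i, 0 < ρ i)
    (hlf : ∀ t : S, ∃ η > 0, {i | dist t (z i) < η + ρ i}.Finite) :
    Continuous (bfn z ρ) := by
  rw [Metric.continuous_iff]
  intro t ε εpos
  obtain ⟨η, ηpos, L, hL0, hLip⟩ := bfn_locLip hρ hlf t
  refine ⟨min η (ε / (L + 1)), lt_min ηpos (by positivity), fun a ha => ?_⟩
  have ha' : a ∈ ball t η := by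
    rw [mem_ball]; exact lt_of_lt_of_le ha (min_le_left _ _)
  have h2 : |bfn z ρ a - bfn z ρ t| ≤ L * dist a t :=
    hLip a ha' t (mem_ball_self ηpos)
  have h3 : dist a t < ε / (L + 1) := lt_of_lt_of_le ha (min_le_right _ _)
  rw [Real.dist_eq]
  calc |bfn z ρ a - bfn z ρ t| ≤ L * dist a t := h2
    _ < ε := by
        have h4 : L * dist a t ≤ L * (ε / (L + 1)) :=
          mul_le_mul_of_nonneg_left h3.le hL0
        have h5 : L * (ε / (L + 1)) < ε := by
          rw [mul_div_assoc']
          rw [div_lt_iff₀ (by linarith)]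
          nlinarith
        linarith

end BumpMachinery


section NLC

variable {S : Type*} [MetricSpace S]

lemma sd_nonisolated (hnlc : ∀ s : S, ¬ ∃ K ∈ nhds s, IsCompact K) (p : S) {δ : ℝ}
    (hδ : 0 < δ) : ∃ q : S, q ≠ p ∧ dist q p < δ := by
  by_contra h
  push_neg at h
  apply hnlc p
  refine ⟨{p}, ?_, isCompact_singleton⟩
  have hsub : ball p δ ⊆ {p} := by
    intro q hq
    rcases eq_or_ne q p with rfl | hne
    · exact mem_singleton _
    · exact absurd (mem_ball.1 hq) (not_lt.2 (h q hne))
  exact Filter.mem_of_superset (ball_mem_nhds p hδ) hsub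

lemma sd_ball_noncompact (hnlc : ∀ s : S, ¬ ∃ K ∈ nhds s, IsCompact K) (s : S) {r : ℝ}
    (hr : 0 < r) : ¬ IsCompact (closedBall s r) :=
  fun h => hnlc s ⟨closedBall s r, closedBall_mem_nhds s hr, h⟩

lemma sd_dichotomy (hnlc : ∀ s : S, ¬ ∃ K ∈ nhds s, IsCompact K) (s : S) {r : ℝ} (hr : 0 < r) :
    (∃ ε > 0, ∃ y : ℕ → S, (∀ k, y k ∈ closedBall s r) ∧
       ∀ k l, k ≠ l → ε ≤ dist (y k) (y l)) ∨
    (∃ y : ℕ → S, (∀ k, y k ∈ closedBall s r) ∧ CauchySeq y ∧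
       ∀ a : S, ¬ Tendsto y atTop (nhds a)) := by
  by_cases htb : TotallyBounded (closedBall s r)
  · right
    have hnc := sd_ball_noncompact hnlc s hr
    have hnsc : ¬ IsSeqCompact (closedBall s r) := fun h => hnc h.isCompact
    rw [IsSeqCompact] at hnsc
    push_neg at hnsc
    obtain ⟨x, hx, hconv⟩ := hnsc
    -- extract a Cauchy subsequence using the completion
    set e : S → UniformSpace.Completion S := (↑) with he
    have hiso : Isometry e := UniformSpace.Completion.coe_isometry
    have htb2 : TotallyBounded (e '' closedBall s r) :=
      htb.image hiso.uniformContinuous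
    have hcpt : IsCompact (closure (e '' closedBall s r)) :=
      TotallyBounded.isCompact_of_isClosed htb2.closure isClosed_closure
    have hxmem : ∀ n, e (x n) ∈ closure (e '' closedBall s r) :=
      fun n => subset_closure ⟨x n, hx n, rfl⟩
    obtain ⟨a, -, φ, hφ, hlim⟩ := hcpt.tendsto_subseq hxmem
    have hcs : CauchySeq (fun n => e (x (φ n))) := hlim.cauchySeq
    have hcs2 : CauchySeq (x ∘ φ) := by
      rw [Metric.cauchySeq_iff] at hcs ⊢
      intro ε εpos
      obtain ⟨N, hN⟩ := hcs ε εpos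
      refine ⟨N, fun m hm n hn => ?_⟩
      have := hN m hm n hn
      rwa [hiso.dist_eq] at this
    refine ⟨x ∘ φ, fun k => hx (φ k), hcs2, fun b hb => ?_⟩
    have hbmem : b ∈ closedBall s r :=
      (Metric.isClosed_closedBall (x := s) (ε := r)).mem_of_tendsto hb (Filter.Eventually.of_forall fun k => hx (φ k))
    exact hconv b hbmem φ hφ hb
  · left
    rw [Metric.totallyBounded_iff] at htb
    push_neg at htb
    obtain ⟨ε, εpos, hcov⟩ := htb
    refine ⟨ε, εpos, ?_⟩
    have key : ∀ t : Finset S, (∀ x ∈ t, x ∈ closedBall s r) →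
        ∃ y, y ∈ closedBall s r ∧ ∀ x ∈ t, ε ≤ dist x y := by
      intro t _
      obtain ⟨y, hy1, hy2⟩ : ∃ y ∈ closedBall s r, y ∉ ⋃ c ∈ (t : Set S), ball c ε := by
        by_contra hc
        push_neg at hc
        exact hcov (t : Set S) t.finite_toSet hc
      refine ⟨y, hy1, fun x hx => ?_⟩
      by_contra hlt
      push_neg at hlt
      exact hy2 (mem_biUnion hx (by rwa [mem_ball, dist_comm]))
    obtain ⟨f, hf1, hf2⟩ := exists_seq_of_forall_finset_exists
      (fun y => y ∈ closedBall s r) (fun a b => ε ≤ dist a b) key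
    refine ⟨f, hf1, fun k l hkl => ?_⟩
    rcases hkl.lt_or_gt with h | h
    · exact hf2 k l h
    · rw [dist_comm]; exact hf2 l k h

end NLC


section Wiggle

variable {S : Type*} [MetricSpace S]

theorem exists_wiggle (hnlc : ∀ s : S, ¬ ∃ K ∈ nhds s, IsCompact K)
    (hdich : ∀ (s : S) {r : ℝ}, 0 < r →
      (∃ ε > 0, ∃ y : ℕ → S, (∀ k, y k ∈ closedBall s r) ∧
         ∀ k l, k ≠ l → ε ≤ dist (y k) (y l)) ∨
      (∃ y : ℕ → S, (∀ k, y k ∈ closedBall s r) ∧ CauchySeq y ∧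
         ∀ a : S, ¬ Tendsto y atTop (nhds a)))
    (d : S) {R : ℝ} (hR : 0 < R) (θ : S → ℝ) (hθ : ∀ t, 0 < θ t) :
    ∃ (z q : ℕ → S) (ρ : ℕ → ℝ),
      (∀ k, 0 < ρ k) ∧ (∀ k, ρ k ≤ R) ∧
      (∀ k, z k ∈ ball d R) ∧ (∀ k, q k ∈ ball d R) ∧
      (∀ k, 0 < dist (z k) (q k)) ∧
      (∀ k, dist (z k) (q k) < θ (z k)) ∧
      (∀ k, dist (z k) (q k) ≤ (1/2 : ℝ)^k) ∧
      (∀ k l, ρ l ≤ dist (q k) (z l)) ∧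
      (∀ t : S, ∃ η > 0, {k | dist t (z k) < η + ρ k}.Finite) := by
  have hR4 : (0:ℝ) < R/4 := by linarith
  rcases hdich d hR4 with ⟨ε₀, ε₀pos, y, hy, hsep⟩ | ⟨y, hy, hcauchy, hnolim⟩
  · -- separated case
    set ε := min ε₀ (R/4) with hε
    have εpos : 0 < ε := lt_min ε₀pos hR4
    have εR : ε ≤ R/4 := min_le_right _ _
    have hsep' : ∀ k l, k ≠ l → ε ≤ dist (y k) (y l) :=
      fun k l h => le_trans (min_le_left _ _) (hsep k l h)
    have hq : ∀ k : ℕ, ∃ q : S, q ≠ y k ∧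
        dist q (y k) < min (θ (y k)) (min ((1/2:ℝ)^k) (ε/8)) := by
      intro k
      apply sd_nonisolated hnlc
      have h1 : (0:ℝ) < (1/2:ℝ)^k := by positivity
      exact lt_min (hθ _) (lt_min h1 (by linarith))
    choose q hqne hqd using hq
    have hτpos : ∀ k, 0 < dist (y k) (q k) := fun k => by
      rw [dist_comm]; exact dist_pos.2 (hqne k)
    have hτ8 : ∀ k, dist (y k) (q k) < ε/8 := fun k => by
      rw [dist_comm]
      exact lt_of_lt_of_le (hqd k) (le_trans (min_le_right _ _) (min_le_right _ _))
    refine ⟨y, q, fun k => dist (y k) (q k) / 2, fun k => by linarith [hτpos k],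
      fun k => by linarith [hτ8 k], ?_, ?_, hτpos, ?_, ?_, ?_, ?_⟩
    · intro k
      have := hy k
      rw [mem_closedBall] at this
      rw [mem_ball]
      linarith
    · intro k
      rw [mem_ball]
      have h1 := hy k
      rw [mem_closedBall] at h1
      have h2 : dist (q k) d ≤ dist (q k) (y k) + dist (y k) d := dist_triangle _ _ _
      rw [dist_comm (q k) (y k)] at h2
      linarith [hτ8 k]
    · intro k
      rw [dist_comm]
      exact lt_of_lt_of_le (hqd k) (min_le_left _ _)
    · intro k
      rw [dist_comm]
      exact le_of_lt (lt_of_lt_of_le (hqd k) (le_trans (min_le_right _ _) (min_le_left _ _)))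
    · intro k l
      rcases eq_or_ne l k with rfl | hne
      · rw [dist_comm]
        linarith [hτpos l]
      · have h1 : ε ≤ dist (y k) (y l) := hsep' k l (fun h => hne h.symm)
        have h2 : dist (y k) (y l) ≤ dist (y k) (q k) + dist (q k) (y l) := dist_triangle _ _ _
        have h3 := hτ8 k
        have h4 := hτ8 l
        linarith
    · intro t
      refine ⟨ε/4, by linarith, ?_⟩
      apply Set.Subsingleton.finite
      intro k hk l hl
      by_contra hkl
      have h1 : ε ≤ dist (y k) (y l) := hsep' k l hkl
      simp only [mem_setOf_eq] at hk hl
      have h2 : dist (y k) (y l) ≤ dist t (y k) + dist t (y l) := dist_triangle_left _ _ _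
      have h3 := hτ8 k
      have h4 := hτ8 l
      linarith
  · -- Cauchy case
    have hD : ∀ t : S, ∃ c : ℝ, 0 < c ∧ Tendsto (fun m => dist t (y m)) atTop (nhds c) := by
      intro t
      have hc : CauchySeq (fun m => dist t (y m)) := by
        rw [Metric.cauchySeq_iff] at hcauchy ⊢
        intro ε εpos
        obtain ⟨N, hN⟩ := hcauchy ε εpos
        refine ⟨N, fun m hm n hn => ?_⟩
        rw [Real.dist_eq]
        have habs := abs_dist_sub_le (y m) (y n) t
        rw [dist_comm (y m) t, dist_comm (y n) t] at habs
        exact lt_of_le_of_lt habs (hN m hm n hn)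
      obtain ⟨c, hc⟩ := cauchySeq_tendsto_of_complete hc
      have hge : 0 ≤ c := ge_of_tendsto' hc fun m => dist_nonneg
      rcases hge.lt_or_eq with hlt | heq
      · exact ⟨c, hlt, hc⟩
      · exfalso
        apply hnolim t
        rw [tendsto_iff_dist_tendsto_zero]
        simp only [dist_comm]
        rw [← heq] at hc
        exact hc
    choose Dlim hDpos hDtend using hD
    have hDle : ∀ t, t ∈ closedBall d (R/4) → Dlim t ≤ R/2 := by
      intro t ht
      apply le_of_tendsto (hDtend t)
      apply Filter.Eventually.of_forall
      intro m
      have h1 : dist t (y m) ≤ dist t d + dist d (y m) := dist_triangle _ _ _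
      have h2 := hy m
      rw [mem_closedBall] at ht h2
      rw [dist_comm d (y m)] at h1
      linarith
    have hstep : ∀ i : ℕ, ∃ j : ℕ, i < j ∧
        (∀ l, j ≤ l → (9/10) * Dlim (y i) ≤ dist (y i) (y l) ∧
          dist (y i) (y l) ≤ (11/10) * Dlim (y i)) ∧
        (∀ l l', j ≤ l → j ≤ l' → dist (y l) (y l') ≤ Dlim (y i) / 1000) := by
      intro i
      have hc := hDpos (y i)
      have h1 : ∀ᶠ l in atTop, dist (y i) (y l) ∈
          Icc ((9/10) * Dlim (y i)) ((11/10) * Dlim (y i)) :=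
        (hDtend (y i)).eventually (Icc_mem_nhds (by linarith) (by linarith))
      obtain ⟨N1, hN1⟩ := eventually_atTop.1 h1
      obtain ⟨N2, hN2⟩ := Metric.cauchySeq_iff.1 hcauchy (Dlim (y i) / 1000) (by positivity)
      refine ⟨max (i+1) (max N1 N2), lt_of_lt_of_le (Nat.lt_succ_self i) (le_max_left _ _),
        fun l hl => ?_, fun l l' hl hl' => ?_⟩
      · have := hN1 l (le_trans (le_trans (le_max_left _ _) (le_max_right _ _)) hl)
        exact ⟨this.1, this.2⟩
      · exact le_of_lt (hN2 l (le_trans (le_trans (le_max_right _ _) (le_max_right _ _)) hl)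
          l' (le_trans (le_trans (le_max_right _ _) (le_max_right _ _)) hl'))
    set step : ℕ → ℕ := fun i => (hstep i).choose with hstepdef
    set m : ℕ → ℕ := fun k => step^[k] 0 with hmdef
    have hm_succ : ∀ k, m (k+1) = step (m k) := fun k => Function.iterate_succ_apply' _ _ _
    have hmono : StrictMono m := strictMono_nat_of_lt_succ fun k => by
      rw [hm_succ]; exact (hstep (m k)).choose_spec.1
    set z : ℕ → S := fun k => y (m k) with hzdef
    set c : ℕ → ℝ := fun k => Dlim (z k) with hcdef
    have cpos : ∀ k, 0 < c k := fun k => hDpos _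
    have hzball : ∀ k, z k ∈ closedBall d (R/4) := fun k => hy _
    have hcR : ∀ k, c k ≤ R/2 := fun k => hDle _ (hzball k)
    have key1 : ∀ k l, k < l →
        (9/10) * c k ≤ dist (z k) (z l) ∧ dist (z k) (z l) ≤ (11/10) * c k := by
      intro k l hkl
      have h1 : step (m k) ≤ m l := by
        rw [← hm_succ]
        exact hmono.monotone hkl
      exact (hstep (m k)).choose_spec.2.1 (m l) h1
    have key2 : ∀ k, c (k+1) ≤ c k / 1000 := by
      intro k
      apply le_of_tendsto (hDtend (z (k+1)))
      filter_upwards [eventually_ge_atTop (step (m k))] with l hl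
      have h1 : step (m k) ≤ m (k+1) := le_of_eq (hm_succ k).symm
      exact (hstep (m k)).choose_spec.2.2 (m (k+1)) l h1 hl
    have cantitone : ∀ k l, k ≤ l → c l ≤ c k := by
      have hsucc : ∀ n, c (n+1) ≤ c n := fun n => (key2 n).trans (by linarith [cpos n])
      exact fun k l hkl => antitone_nat_of_succ_le hsucc hkl
    have cgeo : ∀ k, c k ≤ c 0 * (1/1000 : ℝ)^k := by
      intro k
      induction k with
      | zero => simp
      | succ n ih =>
        calc c (n+1) ≤ c n / 1000 := key2 n
          _ ≤ (c 0 * (1/1000:ℝ)^n) / 1000 := by linarith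
          _ = c 0 * (1/1000:ℝ)^(n+1) := by ring
    have hq : ∀ k : ℕ, ∃ q : S, q ≠ z k ∧
        dist q (z k) < min (θ (z k)) (min ((1/2:ℝ)^k) (c k / 100)) := by
      intro k
      apply sd_nonisolated hnlc
      have h1 : (0:ℝ) < (1/2:ℝ)^k := by positivity
      exact lt_min (hθ _) (lt_min h1 (by linarith [cpos k]))
    choose q hqne hqd using hq
    have hτpos : ∀ k, 0 < dist (z k) (q k) := fun k => by
      rw [dist_comm]; exact dist_pos.2 (hqne k)
    have hτc : ∀ k, dist (z k) (q k) < c k / 100 := fun k => by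
      rw [dist_comm]
      exact lt_of_lt_of_le (hqd k) (le_trans (min_le_right _ _) (min_le_right _ _))
    refine ⟨z, q, fun k => dist (z k) (q k) / 2, fun k => by linarith [hτpos k], ?_, ?_, ?_,
      hτpos, ?_, ?_, ?_, ?_⟩
    · intro k
      have := hτc k
      have := hcR k
      have := cpos k
      simp only
      linarith
    · intro k
      have h1 := hzball k
      rw [mem_closedBall] at h1
      rw [mem_ball]
      linarith
    · intro k
      rw [mem_ball]
      have h1 := hzball k
      rw [mem_closedBall] at h1
      have h2 : dist (q k) d ≤ dist (q k) (z k) + dist (z k) d := dist_triangle _ _ _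
      rw [dist_comm (q k) (z k)] at h2
      have h3 := hτc k
      have h4 := hcR k
      linarith
    · intro k
      rw [dist_comm]
      exact lt_of_lt_of_le (hqd k) (min_le_left _ _)
    · intro k
      rw [dist_comm]
      exact le_of_lt (lt_of_lt_of_le (hqd k) (le_trans (min_le_right _ _) (min_le_left _ _)))
    · intro k l
      simp only
      rcases lt_trichotomy k l with h | h | h
      · have h1 := (key1 k l h).1
        have h2 : dist (z k) (z l) ≤ dist (z k) (q k) + dist (q k) (z l) := dist_triangle _ _ _
        have h3 := hτc k
        have h4 := hτc l
        have h5 : c l ≤ c k := cantitone k l (le_of_lt h)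
        have := cpos l
        linarith
      · subst h
        rw [dist_comm (q k) (z k)]
        linarith [hτpos k]
      · have h1 := (key1 l k h).1
        have h2 : dist (z l) (z k) ≤ dist (z l) (q k) + dist (q k) (z k) := dist_triangle _ _ _
        have h3 := hτc k
        have h4 := hτc l
        have h5 : c k ≤ c l := cantitone l k (le_of_lt h)
        have := cpos l
        rw [dist_comm (z l) (q k), dist_comm (q k) (z k)] at h2
        linarith
    · intro t
      have hlow : ∀ k, Dlim t ≤ dist t (z k) + (11/10) * c k := by
        intro k
        apply le_of_tendsto (hDtend t)
        filter_upwards [eventually_ge_atTop (step (m k))] with l hl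
        have h1 : dist t (y l) ≤ dist t (z k) + dist (z k) (y l) := dist_triangle _ _ _
        have h2 : dist (y (m k)) (y l) ≤ (11/10) * Dlim (y (m k)) :=
          ((hstep (m k)).choose_spec.2.1 l hl).2
        exact le_trans h1 (by exact add_le_add_right h2 _)
      set ct := Dlim t with hct
      have ctpos : 0 < ct := hDpos t
      refine ⟨ct/4, by linarith, ?_⟩
      obtain ⟨K, hK⟩ : ∃ K : ℕ, c 0 * (1/1000:ℝ)^K < ct/2 := by
        obtain ⟨K, hK⟩ := exists_pow_lt_of_lt_one
          (show (0:ℝ) < (ct/2) / (c 0) from div_pos (by linarith) (cpos 0))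
          (show (1/1000:ℝ) < 1 by norm_num)
        refine ⟨K, ?_⟩
        rw [lt_div_iff₀ (cpos 0)] at hK
        calc c 0 * (1/1000:ℝ)^K = (1/1000:ℝ)^K * c 0 := by ring
          _ < ct/2 := hK
      apply Set.Finite.subset (Finset.range K).finite_toSet
      intro k hk
      simp only [mem_setOf_eq] at hk
      simp only [Finset.coe_range, mem_Iio]
      by_contra hkK
      push_neg at hkK
      have h1 : c k ≤ c 0 * (1/1000:ℝ)^k := cgeo k
      have h2 : (1/1000:ℝ)^k ≤ (1/1000:ℝ)^K :=
        pow_le_pow_of_le_one (by norm_num) (by norm_num) hkK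
      have h3 : c k < ct/2 := by
        have h4 : c 0 * (1/1000:ℝ)^k ≤ c 0 * (1/1000:ℝ)^K :=
          mul_le_mul_of_nonneg_left h2 (cpos 0).le
        linarith
      have h5 := hlow k
      have h6 := hτc k
      -- hk : dist t (z k) < ct/4 + dist (z k) (q k) / 2
      linarith
  done

end Wiggle
section Scales

variable {S : Type*} [MetricSpace S]

lemma exists_net (e : ℝ) (he : 0 < e) :
    ∃ D : Set S, (∀ x ∈ D, ∀ y ∈ D, x ≠ y → e ≤ dist x y) ∧ ∀ s : S, ∃ d ∈ D, dist s d < e := by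
  have hchaincond : ∀ c ⊆ {A : Set S | ∀ x ∈ A, ∀ y ∈ A, x ≠ y → e ≤ dist x y},
      IsChain (fun x1 x2 => x1 ⊆ x2) c → ∃ ub ∈ {A : Set S | ∀ x ∈ A, ∀ y ∈ A, x ≠ y → e ≤ dist x y},
        ∀ s ∈ c, s ⊆ ub := by
    intro ch hchsub hchain
    refine ⟨⋃₀ ch, ?_, fun A hA => Set.subset_sUnion_of_mem hA⟩
    rintro x ⟨A, hA, hxA⟩ y ⟨B, hB, hyB⟩ hxy
    rcases hchain.total hA hB with h | h
    · exact hchsub hB x (h hxA) y hyB hxy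
    · exact hchsub hA x hxA y (h hyB) hxy
  obtain ⟨M, hM⟩ := zorn_subset {A : Set S | ∀ x ∈ A, ∀ y ∈ A, x ≠ y → e ≤ dist x y} hchaincond
  refine ⟨M, hM.prop, fun s => ?_⟩
  by_cases hs : s ∈ M
  · exact ⟨s, hs, by simpa using he⟩
  by_contra hc
  push_neg at hc
  have hins : insert s M ∈ {A : Set S | ∀ x ∈ A, ∀ y ∈ A, x ≠ y → e ≤ dist x y} := by
    rintro x (rfl | hx) y (rfl | hy) hxy
    · exact absurd rfl hxy
    · exact hc y hy
    · rw [dist_comm]; exact hc x hx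
    · exact hM.prop x hx y hy hxy
  have hsub : M ⊆ insert s M := Set.subset_insert _ _
  have hMi := hM.2 hins hsub
  exact hs (hMi (Set.mem_insert s M))

/-- Local Lipschitz property. -/
def LocLip (u : S → ℝ) : Prop :=
  ∀ t : S, ∃ η > 0, ∃ L : ℝ, 0 ≤ L ∧
    ∀ a ∈ ball t η, ∀ b ∈ ball t η, |u a - u b| ≤ L * dist a b

/-- Oscillation property at scale `n`, with smallness of the previous scales at the
oscillation pairs. -/
def WigAt (n : ℕ) (u : S → ℝ) (v : ℕ → S → ℝ) : Prop :=
  ∀ (s : S) (δ : ℝ), 0 < δ →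
    ∃ p q : S, dist p s < (1/2:ℝ)^n ∧ dist q s < (1/2:ℝ)^n ∧ 0 < dist p q ∧ dist p q < δ ∧
      u p = 1 ∧ u q = 0 ∧ ∀ m, m < n → |v m p - v m q| ≤ (1/4:ℝ)^(2*n+1)

lemma exists_pos_le_forall (g : ℕ → ℝ) (hg : ∀ m, 0 < g m) (n : ℕ) :
    ∃ c : ℝ, 0 < c ∧ ∀ m, m < n → c ≤ g m := by
  induction n with
  | zero => exact ⟨1, one_pos, fun m h => absurd h (Nat.not_lt_zero m)⟩
  | succ k ih =>
    obtain ⟨c, hc, hcle⟩ := ih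
    refine ⟨min c (g k), lt_min hc (hg k), fun m hm => ?_⟩
    rcases Nat.lt_succ_iff_lt_or_eq.1 hm with h | h
    · exact le_trans (min_le_left _ _) (hcle m h)
    · subst h; exact min_le_right _ _

lemma exists_scale (hnlc : ∀ s : S, ¬ ∃ K ∈ nhds s, IsCompact K)
    (n : ℕ) (v : ℕ → S → ℝ) (hv : ∀ m, m < n → LocLip (v m)) :
    ∃ u : S → ℝ, (∀ t, u t ∈ Set.Icc (0:ℝ) 1) ∧ LocLip u ∧ WigAt n u v := by
  classical
  have hdich : ∀ (s : S) {r : ℝ}, 0 < r →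
      (∃ ε > 0, ∃ y : ℕ → S, (∀ k, y k ∈ closedBall s r) ∧
         ∀ k l, k ≠ l → ε ≤ dist (y k) (y l)) ∨
      (∃ y : ℕ → S, (∀ k, y k ∈ closedBall s r) ∧ CauchySeq y ∧
         ∀ a : S, ¬ Filter.Tendsto y Filter.atTop (nhds a)) :=
    fun s {r} hr => sd_dichotomy hnlc s hr
  set R : ℝ := (1/2:ℝ)^n/16 with hRdef
  have hpow : (0:ℝ) < (1/2:ℝ)^n := by positivity
  have hRpos : 0 < R := by rw [hRdef]; linarith
  set e : ℝ := (1/2:ℝ)^n/2 with hedef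
  have hepos : 0 < e := by rw [hedef]; linarith
  have he8 : e = 8 * R := by rw [hedef, hRdef]; ring
  obtain ⟨D, hDsep, hDcov⟩ := exists_net (S := S) e hepos
  have hv' : ∀ (m : ℕ) (t : S), ∃ η > 0, ∃ L : ℝ, 0 ≤ L ∧ (m < n →
      ∀ a ∈ ball t η, ∀ b ∈ ball t η, |v m a - v m b| ≤ L * dist a b) := by
    intro m t
    by_cases h : m < n
    · obtain ⟨η, ηpos, L, hL, hLip⟩ := hv m h t
      exact ⟨η, ηpos, L, hL, fun _ => hLip⟩
    · exact ⟨1, one_pos, 0, le_refl 0, fun h' => absurd h' h⟩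
  choose ηf hηf Lf hLf hLip using hv'
  have hκ : (0:ℝ) < (1/4:ℝ)^(2*n+1) := by positivity
  have hθex : ∀ t : S, ∃ c : ℝ, 0 < c ∧ ∀ m, m < n →
      c ≤ min (ηf m t) ((1/4:ℝ)^(2*n+1)/(Lf m t + 1)) := by
    intro t
    apply exists_pos_le_forall
    intro m
    have h1 : 0 < Lf m t + 1 := by linarith [hLf m t]
    exact lt_min (hηf m t) (div_pos hκ h1)
  choose θ hθpos hθle using hθex
  have hwig := fun (dd : S) =>
    exists_wiggle hnlc hdich dd (R := R) hRpos θ hθpos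
  choose zf qf ρf hρpos hρR hzball hqball hτpos hτθ hτsmall hexcl hlf using hwig
  set ι := ({x : S // x ∈ D} × ℕ)
  set Z : ι → S := fun p => zf p.1.1 p.2 with hZdef
  set P : ι → ℝ := fun p => ρf p.1.1 p.2 with hPdef
  have hP : ∀ i : ι, 0 < P i := fun i => hρpos _ _
  have hPR : ∀ i : ι, P i ≤ R := fun i => hρR _ _
  have hZd : ∀ i : ι, dist (Z i) i.1.1 < R := fun i => mem_ball.1 (hzball _ _)
  have hLF : ∀ t : S, ∃ η > 0, {i : ι | dist t (Z i) < η + P i}.Finite := by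
    intro t
    by_cases hex : ∃ dd : {x : S // x ∈ D}, dist t dd.1 < 3*R
    · obtain ⟨d₀, hd₀⟩ := hex
      obtain ⟨η₀, η₀pos, hfin⟩ := hlf d₀.1 t
      refine ⟨min R η₀, lt_min hRpos η₀pos, ?_⟩
      apply Set.Finite.subset (hfin.image (fun k => ((d₀, k) : ι)))
      intro i hi
      have h1 : dist t (Z i) < R + P i :=
        lt_of_lt_of_le hi (add_le_add_left (min_le_left _ _) _)
      have h2 : dist t i.1.1 < 3*R := by
        have h3 : dist t i.1.1 ≤ dist t (Z i) + dist (Z i) i.1.1 := dist_triangle _ _ _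
        have h4 := hZd i
        have h5 := hPR i
        linarith
      have heq : i.1 = d₀ := by
        by_contra hne
        have hne' : (i.1 : S) ≠ (d₀ : S) := fun hh => hne (Subtype.ext hh)
        have hd := hDsep i.1.1 i.1.2 d₀.1 d₀.2 hne'
        have h6 : dist i.1.1 d₀.1 ≤ dist t i.1.1 + dist t d₀.1 := dist_triangle_left _ _ _
        rw [he8] at hd
        linarith
      refine ⟨i.2, ?_, ?_⟩
      · simp only [Set.mem_setOf_eq]
        have h7 : dist t (Z i) < η₀ + P i :=
          lt_of_lt_of_le hi (add_le_add_left (min_le_right _ _) _)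
        have h8 : Z i = zf d₀.1 i.2 := by rw [hZdef]; simp [heq]
        have h9 : P i = ρf d₀.1 i.2 := by rw [hPdef]; simp [heq]
        rw [← h8, ← h9]
        exact h7
      · rw [← heq]
    · push_neg at hex
      refine ⟨R, hRpos, ?_⟩
      convert Set.finite_empty
      ext i
      simp only [Set.mem_setOf_eq, Set.mem_empty_iff_false, iff_false, not_lt]
      by_contra hcon
      push_neg at hcon
      have h1 : dist t i.1.1 ≤ dist t (Z i) + dist (Z i) i.1.1 := dist_triangle _ _ _
      have h2 := hZd i
      have h3 := hPR i
      have h4 := hex i.1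
      linarith
  refine ⟨bfn Z P, fun t => ⟨bfn_nonneg hP t, bfn_le_one hP t⟩, bfn_locLip hP hLF, ?_⟩
  intro s δ hδ
  obtain ⟨d₀, hd₀D, hd₀⟩ := hDcov s
  obtain ⟨k, hk⟩ : ∃ k : ℕ, (1/2:ℝ)^k < δ := exists_pow_lt_of_lt_one hδ (by norm_num)
  set p := zf d₀ k
  set q := qf d₀ k
  have hpball : dist p d₀ < R := mem_ball.1 (hzball d₀ k)
  have hqball' : dist q d₀ < R := mem_ball.1 (hqball d₀ k)
  have hps : dist p s < (1/2:ℝ)^n := by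
    have h1 : dist p s ≤ dist p d₀ + dist s d₀ := by
      rw [dist_comm s d₀]; exact dist_triangle _ _ _
    rw [hRdef] at hpball
    rw [hedef] at hd₀
    linarith
  have hqs : dist q s < (1/2:ℝ)^n := by
    have h1 : dist q s ≤ dist q d₀ + dist s d₀ := by
      rw [dist_comm s d₀]; exact dist_triangle _ _ _
    rw [hRdef] at hqball'
    rw [hedef] at hd₀
    linarith
  refine ⟨p, q, hps, hqs, hτpos d₀ k, lt_of_le_of_lt (hτsmall d₀ k) hk, ?_, ?_, ?_⟩
  · exact bfn_center hP (⟨⟨d₀, hd₀D⟩, k⟩ : ι)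
  · apply bfn_eq_zero hP
    rintro ⟨d₁, k₁⟩
    by_cases hd : (d₁ : S) = d₀
    · show ρf d₁.1 k₁ ≤ dist q (zf d₁.1 k₁)
      rw [hd]
      exact hexcl d₀ k k₁
    · show ρf d₁.1 k₁ ≤ dist q (zf d₁.1 k₁)
      have h1 : dist (zf d₁.1 k₁) d₁.1 < R := mem_ball.1 (hzball _ _)
      have h2 : e ≤ dist d₁.1 d₀ := hDsep d₁.1 d₁.2 d₀ hd₀D hd
      have h3 : dist d₁.1 d₀ ≤ dist d₁.1 (zf d₁.1 k₁) + dist (zf d₁.1 k₁) q + dist q d₀ :=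
        dist_triangle4 _ _ _ _
      rw [dist_comm d₁.1 (zf d₁.1 k₁)] at h3
      rw [dist_comm (zf d₁.1 k₁) q] at h3
      have h4 := hρR d₁.1 k₁
      rw [he8] at h2
      linarith
  · intro m hm
    have hθm := hθle p m hm
    have hτ : dist p q < θ p := hτθ d₀ k
    have h1 : dist p q < ηf m p := by
      have := le_trans hθm (min_le_left _ _)
      linarith
    have h2 : dist p q < (1/4:ℝ)^(2*n+1)/(Lf m p + 1) := by
      have := le_trans hθm (min_le_right _ _)
      linarith
    have hq1 : q ∈ ball p (ηf m p) := by rw [mem_ball, dist_comm]; exact h1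
    have hp1 : p ∈ ball p (ηf m p) := mem_ball_self (hηf m p)
    have h3 : |v m p - v m q| ≤ Lf m p * dist p q := hLip m p hm p hp1 q hq1
    have hL1 : 0 < Lf m p + 1 := by linarith [hLf m p]
    have h4 : Lf m p * dist p q ≤ Lf m p * ((1/4:ℝ)^(2*n+1)/(Lf m p + 1)) :=
      mul_le_mul_of_nonneg_left h2.le (hLf m p)
    have h5 : Lf m p * ((1/4:ℝ)^(2*n+1)/(Lf m p + 1)) ≤ (1/4:ℝ)^(2*n+1) := by
      rw [mul_div_assoc', div_le_iff₀ hL1]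
      nlinarith [hLf m p]
    linarith

end Scales
section Recursion

variable {S : Type*} [MetricSpace S]

/-- Goodness of the `n`-th function in a sequence of scale functions. -/
def GoodAt (n : ℕ) (w : ℕ → S → ℝ) : Prop :=
  (∀ t, w n t ∈ Set.Icc (0:ℝ) 1) ∧ LocLip (w n) ∧ WigAt n (w n) w

lemma WigAt.congr {n : ℕ} {u : S → ℝ} {v v' : ℕ → S → ℝ} (h : WigAt n u v)
    (hv : ∀ m, m < n → v' m = v m) : WigAt n u v' := by
  intro s δ hδ
  obtain ⟨p, q, h1, h2, h3, h4, h5, h6, h7⟩ := h s δ hδ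
  exact ⟨p, q, h1, h2, h3, h4, h5, h6, fun m hm => by rw [hv m hm]; exact h7 m hm⟩

lemma GoodAt.congr {n : ℕ} {w w' : ℕ → S → ℝ} (h : GoodAt n w)
    (he : ∀ m, m ≤ n → w' m = w m) : GoodAt n w' := by
  refine ⟨by rw [he n le_rfl]; exact h.1, by rw [he n le_rfl]; exact h.2.1, ?_⟩
  rw [he n le_rfl]
  exact h.2.2.congr (fun m hm => he m hm.le)

noncomputable def sdChoice (hnlc : ∀ s : S, ¬ ∃ K ∈ nhds s, IsCompact K) (n : ℕ)
    (prev : {w : ℕ → S → ℝ // ∀ m, m < n → GoodAt m w}) : S → ℝ :=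
  Classical.choose (exists_scale hnlc n prev.1 (fun m hm => (prev.2 m hm).2.1))

noncomputable def sdStep (hnlc : ∀ s : S, ¬ ∃ K ∈ nhds s, IsCompact K) (n : ℕ)
    (prev : {w : ℕ → S → ℝ // ∀ m, m < n → GoodAt m w}) :
    {w : ℕ → S → ℝ // ∀ m, m < n + 1 → GoodAt m w} :=
  ⟨Function.update prev.1 n (sdChoice hnlc n prev), by
    have hu := Classical.choose_spec
      (exists_scale hnlc n prev.1 (fun m hm => (prev.2 m hm).2.1))
    intro m hm
    rcases Nat.lt_succ_iff_lt_or_eq.1 hm with h | h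
    · exact (prev.2 m h).congr (fun l hl => Function.update_of_ne (by omega) _ _)
    · subst h
      refine ⟨?_, ?_, ?_⟩
      · rw [Function.update_self]; exact hu.1
      · rw [Function.update_self]; exact hu.2.1
      · rw [Function.update_self]
        exact hu.2.2.congr (fun l hl => Function.update_of_ne (by omega) _ _)⟩

noncomputable def sdChain (hnlc : ∀ s : S, ¬ ∃ K ∈ nhds s, IsCompact K) :
    (n : ℕ) → {w : ℕ → S → ℝ // ∀ m, m < n → GoodAt m w} := fun n =>
  Nat.rec ⟨fun _ _ => 0, fun m hm => absurd hm (Nat.not_lt_zero m)⟩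
    (fun n prev => sdStep hnlc n prev) n

lemma sdChain_succ (hnlc : ∀ s : S, ¬ ∃ K ∈ nhds s, IsCompact K) (n : ℕ) :
    sdChain hnlc (n+1) = sdStep hnlc n (sdChain hnlc n) := rfl

lemma sdChain_stable (hnlc : ∀ s : S, ¬ ∃ K ∈ nhds s, IsCompact K) :
    ∀ (k n m : ℕ), m < n → (sdChain hnlc (n + k)).1 m = (sdChain hnlc n).1 m := by
  intro k
  induction k with
  | zero => intro n m _; rfl
  | succ k ih =>
    intro n m hm
    have h1 : n + (k+1) = (n + k) + 1 := by omega
    rw [h1, sdChain_succ]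
    show Function.update (sdChain hnlc (n+k)).1 (n+k) _ m = _
    rw [Function.update_of_ne (by omega : m ≠ n + k)]
    exact ih n m hm

/-- The sequence of scale functions. -/
noncomputable def sdU (hnlc : ∀ s : S, ¬ ∃ K ∈ nhds s, IsCompact K) : ℕ → S → ℝ :=
  fun n => (sdChain hnlc (n+1)).1 n

lemma sdU_good (hnlc : ∀ s : S, ¬ ∃ K ∈ nhds s, IsCompact K) (n : ℕ) :
    GoodAt n (sdU hnlc) := by
  have h := (sdChain hnlc (n+1)).2 n (Nat.lt_succ_self n)
  apply h.congr
  intro m hm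
  show sdU hnlc m = (sdChain hnlc (n+1)).1 m
  have h2 := sdChain_stable hnlc (n - m) (m+1) m (Nat.lt_succ_self m)
  have h3 : (m+1) + (n-m) = n+1 := by omega
  rw [h3] at h2
  exact h2.symm

lemma LocLip.continuous {u : S → ℝ} (h : LocLip u) : Continuous u := by
  rw [Metric.continuous_iff]
  intro t ε εpos
  obtain ⟨η, ηpos, L, hL0, hLip⟩ := h t
  refine ⟨min η (ε / (L + 1)), lt_min ηpos (by positivity), fun a ha => ?_⟩
  have ha' : a ∈ ball t η := by
    rw [mem_ball]; exact lt_of_lt_of_le ha (min_le_left _ _)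
  have h2 : |u a - u t| ≤ L * dist a t := hLip a ha' t (mem_ball_self ηpos)
  have h3 : dist a t < ε / (L + 1) := lt_of_lt_of_le ha (min_le_right _ _)
  rw [Real.dist_eq]
  have h4 : L * dist a t ≤ L * (ε / (L + 1)) := mul_le_mul_of_nonneg_left h3.le hL0
  have h5 : L * (ε / (L + 1)) < ε := by
    rw [mul_div_assoc', div_lt_iff₀ (by linarith)]
    nlinarith
  linarith

/-- The nowhere locally uniformly continuous function. -/
noncomputable def sdH (hnlc : ∀ s : S, ¬ ∃ K ∈ nhds s, IsCompact K) : S → ℝ :=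
  fun t => ∑' n, (1/4:ℝ)^n * sdU hnlc n t

lemma sdU_mem (hnlc : ∀ s : S, ¬ ∃ K ∈ nhds s, IsCompact K) (n : ℕ) (t : S) :
    sdU hnlc n t ∈ Set.Icc (0:ℝ) 1 := (sdU_good hnlc n).1 t

lemma sdH_norm_bound (hnlc : ∀ s : S, ¬ ∃ K ∈ nhds s, IsCompact K) (n : ℕ) (t : S) :
    ‖(1/4:ℝ)^n * sdU hnlc n t‖ ≤ (1/4:ℝ)^n := by
  obtain ⟨h1, h2⟩ := sdU_mem hnlc n t
  rw [Real.norm_eq_abs, abs_mul, abs_of_nonneg (by positivity : (0:ℝ) ≤ (1/4:ℝ)^n),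
    abs_of_nonneg h1]
  nlinarith [pow_pos (by norm_num : (0:ℝ) < 1/4) n]

lemma sdH_summable (hnlc : ∀ s : S, ¬ ∃ K ∈ nhds s, IsCompact K) (t : S) :
    Summable (fun n => (1/4:ℝ)^n * sdU hnlc n t) := by
  apply Summable.of_norm_bounded
    (show Summable (fun k : ℕ => (1/4:ℝ)^k) from
      summable_geometric_of_lt_one (by norm_num) (by norm_num))
  exact fun n => sdH_norm_bound hnlc n t

lemma sdH_continuous (hnlc : ∀ s : S, ¬ ∃ K ∈ nhds s, IsCompact K) :
    Continuous (sdH hnlc) := by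
  apply continuous_tsum
  · intro n
    exact Continuous.mul continuous_const (sdU_good hnlc n).2.1.continuous
  · exact (show Summable (fun k : ℕ => (1/4:ℝ)^k) from
      summable_geometric_of_lt_one (by norm_num) (by norm_num))
  · exact fun n t => sdH_norm_bound hnlc n t

lemma sdH_bound (hnlc : ∀ s : S, ¬ ∃ K ∈ nhds s, IsCompact K) (t : S) : |sdH hnlc t| ≤ 2 := by
  have h1 : ‖sdH hnlc t‖ ≤ ∑' n, (1/4:ℝ)^n := by
    apply norm_tsum_le_tsum_norm ((sdH_summable hnlc t).norm) |>.trans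
    exact Summable.tsum_le_tsum (fun n => sdH_norm_bound hnlc n t) (sdH_summable hnlc t).norm
      (summable_geometric_of_lt_one (by norm_num) (by norm_num))
  rw [tsum_geometric_of_lt_one (by norm_num) (by norm_num)] at h1
  rw [← Real.norm_eq_abs]
  norm_num at h1 ⊢
  linarith

set_option maxHeartbeats 2000000 in
lemma sdH_nluc (hnlc : ∀ s : S, ¬ ∃ K ∈ nhds s, IsCompact K) (s : S) {r : ℝ} (hr : 0 < r)
    {c : ℝ} (hc : c ≠ 0) :
    ¬ UniformContinuousOn (fun t => c * sdH hnlc t) (ball s r) := by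
  intro hUC
  obtain ⟨n, hn⟩ : ∃ n : ℕ, (1/2:ℝ)^n < r := exists_pow_lt_of_lt_one hr (by norm_num)
  rw [Metric.uniformContinuousOn_iff] at hUC
  have hcpos : 0 < |c| := abs_pos.2 hc
  have hpow4 : (0:ℝ) < (1/4:ℝ)^n := by positivity
  obtain ⟨δ, δpos, hδ⟩ := hUC (|c| * (1/4:ℝ)^n / 7) (by positivity)
  obtain ⟨p, q, h1, h2, h3, h4, h5, h6, h7⟩ := (sdU_good hnlc n).2.2 s δ δpos
  have hps : p ∈ ball s r := mem_ball.2 (lt_trans h1 hn)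
  have hqs : q ∈ ball s r := mem_ball.2 (lt_trans h2 hn)
  have hlt := hδ p hps q hqs h4
  -- Now derive the lower bound on |sdsdH hnlc p - sdsdH hnlc q|
  have hsplit : ∀ t : S, sdH hnlc t = (∑ m ∈ Finset.range (n+1), (1/4:ℝ)^m * sdU hnlc m t) +
      ∑' k, (1/4:ℝ)^(k+(n+1)) * sdU hnlc (k+(n+1)) t := by
    intro t
    have hs := Summable.sum_add_tsum_nat_add (n+1) (sdH_summable hnlc t)
    simpa [sdH] using hs.symm
  have hsummT : ∀ t : S, Summable (fun k => (1/4:ℝ)^(k+(n+1)) * sdU hnlc (k+(n+1)) t) := by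
    intro t
    apply Summable.of_norm_bounded
      (show Summable (fun k : ℕ => (1/4:ℝ)^k) from
        summable_geometric_of_lt_one (by norm_num) (by norm_num))
    intro k
    refine (sdH_norm_bound hnlc (k+(n+1)) t).trans ?_
    exact pow_le_pow_of_le_one (by norm_num) (by norm_num) (by omega)
  have hT : |(∑' k, (1/4:ℝ)^(k+(n+1)) * sdU hnlc (k+(n+1)) p) -
      ∑' k, (1/4:ℝ)^(k+(n+1)) * sdU hnlc (k+(n+1)) q| ≤ (1/4:ℝ)^n / 3 := by
    rw [← Summable.tsum_sub (hsummT p) (hsummT q)]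
    have hb : ∀ k : ℕ, ‖(1/4:ℝ)^(k+(n+1)) * sdU hnlc (k+(n+1)) p -
        (1/4:ℝ)^(k+(n+1)) * sdU hnlc (k+(n+1)) q‖ ≤ (1/4:ℝ)^(k+(n+1)) := by
      intro k
      rw [← mul_sub, Real.norm_eq_abs, abs_mul,
        abs_of_nonneg (by positivity : (0:ℝ) ≤ (1/4:ℝ)^(k+(n+1)))]
      have h8 := sdU_mem hnlc (k+(n+1)) p
      have h9 := sdU_mem hnlc (k+(n+1)) q
      have h10 : |sdU hnlc (k+(n+1)) p - sdU hnlc (k+(n+1)) q| ≤ 1 := by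
        rw [abs_le]
        constructor <;> [skip; skip] <;>
          · obtain ⟨ha, hb'⟩ := h8; obtain ⟨hc', hd⟩ := h9; linarith
      nlinarith [pow_pos (by norm_num : (0:ℝ) < 1/4) (k+(n+1))]
    have hsumgeo : Summable (fun k : ℕ => (1/4:ℝ)^(k+(n+1))) := by
      apply Summable.of_norm_bounded
        (show Summable (fun k : ℕ => (1/4:ℝ)^k) from
          summable_geometric_of_lt_one (by norm_num) (by norm_num))
      intro k
      rw [Real.norm_eq_abs, abs_of_nonneg (by positivity : (0:ℝ) ≤ (1/4:ℝ)^(k+(n+1)))]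
      exact pow_le_pow_of_le_one (by norm_num) (by norm_num) (by omega)
    rw [← Real.norm_eq_abs]
    refine (norm_tsum_le_tsum_norm ?_).trans ?_
    · exact ((hsummT p).sub (hsummT q)).norm
    refine (Summable.tsum_le_tsum hb ((hsummT p).sub (hsummT q)).norm hsumgeo).trans ?_
    have : ∑' k : ℕ, (1/4:ℝ)^(k+(n+1)) = (1/4:ℝ)^(n+1) * (4/3) := by
      have h11 : ∀ k : ℕ, (1/4:ℝ)^(k+(n+1)) = (1/4:ℝ)^(n+1) * (1/4:ℝ)^k := by
        intro k; rw [pow_add]; ring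
      rw [tsum_congr h11, tsum_mul_left, tsum_geometric_of_lt_one (by norm_num) (by norm_num)]
      norm_num
    rw [this]
    calc (1/4:ℝ)^(n+1) * (4/3) = (1/4:ℝ)^n * (1/3) := by rw [pow_succ]; ring
      _ ≤ (1/4:ℝ)^n / 3 := by linarith
  have hS : |∑ m ∈ Finset.range n, (1/4:ℝ)^m * (sdU hnlc m p - sdU hnlc m q)| ≤ (1/4:ℝ)^n / 2 := by
    have hb : ∀ m ∈ Finset.range n, |(1/4:ℝ)^m * (sdU hnlc m p - sdU hnlc m q)| ≤
        (1/4:ℝ)^m * (1/4:ℝ)^(2*n+1) := by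
      intro m hm
      rw [Finset.mem_range] at hm
      rw [abs_mul, abs_of_nonneg (by positivity : (0:ℝ) ≤ (1/4:ℝ)^m)]
      exact mul_le_mul_of_nonneg_left (h7 m hm) (by positivity)
    refine (Finset.abs_sum_le_sum_abs _ _).trans ?_
    refine (Finset.sum_le_sum hb).trans ?_
    rw [← Finset.sum_mul]
    have hgs : ∑ m ∈ Finset.range n, (1/4:ℝ)^m ≤ 2 := by
      refine (Summable.sum_le_tsum (Finset.range n) (fun m _ => by positivity)
        (summable_geometric_of_lt_one (by norm_num) (by norm_num))).trans ?_
      · rw [tsum_geometric_of_lt_one (by norm_num) (by norm_num)]; norm_num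
    have hκ : (1/4:ℝ)^(2*n+1) ≤ (1/4:ℝ)^n * (1/4:ℝ) := by
      have : (1/4:ℝ)^(2*n+1) = (1/4:ℝ)^n * (1/4:ℝ)^(n+1) := by rw [← pow_add]; ring_nf
      rw [this]
      have h12 : (1/4:ℝ)^(n+1) ≤ (1/4:ℝ)^1 :=
        pow_le_pow_of_le_one (by norm_num) (by norm_num) (by omega)
      have h13 : (0:ℝ) ≤ (1/4:ℝ)^n := by positivity
      nlinarith
    calc (∑ m ∈ Finset.range n, (1/4:ℝ)^m) * (1/4:ℝ)^(2*n+1) ≤ 2 * ((1/4:ℝ)^n * (1/4:ℝ)) := by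
          have h14 : (0:ℝ) ≤ (1/4:ℝ)^(2*n+1) := by positivity
          have h15 : (0:ℝ) ≤ ∑ m ∈ Finset.range n, (1/4:ℝ)^m :=
            Finset.sum_nonneg fun m _ => by positivity
          nlinarith
      _ = (1/4:ℝ)^n / 2 := by ring
  have hgap : (1/4:ℝ)^n / 6 ≤ |sdH hnlc p - sdH hnlc q| := by
    have hHp := hsplit p
    have hHq := hsplit q
    have hsum : ∑ m ∈ Finset.range (n+1), (1/4:ℝ)^m * sdU hnlc m p -
        ∑ m ∈ Finset.range (n+1), (1/4:ℝ)^m * sdU hnlc m q =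
        (∑ m ∈ Finset.range n, (1/4:ℝ)^m * (sdU hnlc m p - sdU hnlc m q)) + (1/4:ℝ)^n := by
      have hring : ∀ m ∈ Finset.range n, (1/4:ℝ)^m * (sdU hnlc m p - sdU hnlc m q)
          = (1/4:ℝ)^m * sdU hnlc m p - (1/4:ℝ)^m * sdU hnlc m q := fun m _ => by ring
      rw [Finset.sum_range_succ, Finset.sum_range_succ, h5, h6,
        Finset.sum_congr rfl hring, Finset.sum_sub_distrib]
      ring
    have h18 : sdH hnlc p - sdH hnlc q = ((∑ m ∈ Finset.range n, (1/4:ℝ)^m * (sdU hnlc m p - sdU hnlc m q)) + (1/4:ℝ)^n) +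
        ((∑' k, (1/4:ℝ)^(k+(n+1)) * sdU hnlc (k+(n+1)) p) -
         ∑' k, (1/4:ℝ)^(k+(n+1)) * sdU hnlc (k+(n+1)) q) := by
      rw [hHp, hHq, ← hsum]; ring
    rw [h18]
    have h19 := abs_le.1 hT
    have h20 := abs_le.1 hS
    rw [le_abs]
    left
    linarith [h19.1, h19.2, h20.1, h20.2]
  have hdist : dist (c * sdH hnlc p) (c * sdH hnlc q) = |c| * |sdH hnlc p - sdH hnlc q| := by
    rw [Real.dist_eq, ← mul_sub, abs_mul]
  rw [hdist] at hlt
  have h21 : |c| * ((1/4:ℝ)^n / 6) ≤ |c| * |sdH hnlc p - sdH hnlc q| :=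
    mul_le_mul_of_nonneg_left hgap hcpos.le
  nlinarith

end Recursion
section Coding

open Set

/-- The basic clopen box in `(ℕ → ℕ) × (ℕ → ℕ)` coded by `k`, constrained to have
cylinder length at most `n`. -/
def sdBox (n k : ℕ) : Set ((ℕ → ℕ) × (ℕ → ℕ)) :=
  {p | (Denumerable.ofNat (List ℕ × List ℕ) k).1.length ≤ n ∧
       (Denumerable.ofNat (List ℕ × List ℕ) k).2.length ≤ n ∧
       (∀ i, i < (Denumerable.ofNat (List ℕ × List ℕ) k).1.length →
          p.1 i = (Denumerable.ofNat (List ℕ × List ℕ) k).1.getD i 0) ∧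
       (∀ i, i < (Denumerable.ofNat (List ℕ × List ℕ) k).2.length →
          p.2 i = (Denumerable.ofNat (List ℕ × List ℕ) k).2.getD i 0)}

lemma sdBox_local {n k : ℕ} {p p' : (ℕ → ℕ) × (ℕ → ℕ)}
    (h1 : ∀ i, i < n → p.1 i = p'.1 i) (h2 : ∀ i, i < n → p.2 i = p'.2 i) :
    p ∈ sdBox n k ↔ p' ∈ sdBox n k := by
  constructor <;> intro ⟨ha, hb, hc, hd⟩ <;> refine ⟨ha, hb, fun i hi => ?_, fun i hi => ?_⟩
  · rw [← h1 i (lt_of_lt_of_le hi ha)]; exact hc i hi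
  · rw [← h2 i (lt_of_lt_of_le hi hb)]; exact hd i hi
  · rw [h1 i (lt_of_lt_of_le hi ha)]; exact hc i hi
  · rw [h2 i (lt_of_lt_of_le hi hb)]; exact hd i hi

/-- Code of an empty box (the length constraint fails). -/
def sdDummy (n : ℕ) : ℕ := Encodable.encode ((List.replicate (n+1) 0, []) : List ℕ × List ℕ)

lemma sdBox_dummy (n : ℕ) : sdBox n (sdDummy n) = ∅ := by
  ext p
  simp only [sdBox, sdDummy, Denumerable.ofNat_encode, mem_setOf_eq, mem_empty_iff_false,
    iff_false, not_and]
  intro h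
  rw [List.length_replicate] at h
  omega

lemma isOpen_sdBox (n k : ℕ) : IsOpen (sdBox n k) := by
  set σ := (Denumerable.ofNat (List ℕ × List ℕ) k).1 with hσ
  set τ := (Denumerable.ofNat (List ℕ × List ℕ) k).2 with hτ
  by_cases hl : σ.length ≤ n ∧ τ.length ≤ n
  · have heq : sdBox n k =
        (⋂ i ∈ Finset.range σ.length, {p : (ℕ → ℕ) × (ℕ → ℕ) | p.1 i = σ.getD i 0}) ∩
        (⋂ i ∈ Finset.range τ.length, {p : (ℕ → ℕ) × (ℕ → ℕ) | p.2 i = τ.getD i 0}) := by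
      ext p
      simp only [sdBox, mem_setOf_eq, mem_inter_iff, mem_iInter, Finset.mem_range, ← hσ, ← hτ]
      constructor
      · rintro ⟨-, -, hc, hd⟩
        exact ⟨fun i hi => hc i hi, fun i hi => hd i hi⟩
      · rintro ⟨hc, hd⟩
        exact ⟨hl.1, hl.2, fun i hi => hc i hi, fun i hi => hd i hi⟩
    rw [heq]
    apply IsOpen.inter
    · apply isOpen_biInter_finset
      intro i _
      have : Continuous (fun p : (ℕ → ℕ) × (ℕ → ℕ) => p.1 i) :=
        (continuous_apply i).comp continuous_fst
      exact IsOpen.preimage this (isOpen_discrete {σ.getD i 0})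
    · apply isOpen_biInter_finset
      intro i _
      have : Continuous (fun p : (ℕ → ℕ) × (ℕ → ℕ) => p.2 i) :=
        (continuous_apply i).comp continuous_snd
      exact IsOpen.preimage this (isOpen_discrete {τ.getD i 0})
  · have heq : sdBox n k = ∅ := by
      ext p
      simp only [sdBox, mem_setOf_eq, mem_empty_iff_false, iff_false, ← hσ, ← hτ]
      intro hcon
      exact hl ⟨hcon.1, hcon.2.1⟩
    rw [heq]
    exact isOpen_empty

/-- Every open set of the product contains a cylinder around each of its points. -/
lemma exists_cylinder {O : Set ((ℕ → ℕ) × (ℕ → ℕ))} (hO : IsOpen O)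
    {p : (ℕ → ℕ) × (ℕ → ℕ)} (hp : p ∈ O) :
    ∃ m : ℕ, ∀ q : (ℕ → ℕ) × (ℕ → ℕ), (∀ i, i < m → q.1 i = p.1 i) →
      (∀ i, i < m → q.2 i = p.2 i) → q ∈ O := by
  obtain ⟨U, V, hU, hV, hpU, hpV, hUV⟩ := (isOpen_prod_iff).1 hO p.1 p.2 hp
  obtain ⟨I, u, hIu, hIsub⟩ := (isOpen_pi_iff).1 hU p.1 hpU
  obtain ⟨J, v, hJv, hJsub⟩ := (isOpen_pi_iff).1 hV p.2 hpV
  classical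
  set m := (I ∪ J).sup id + 1 with hm
  have hIm : ∀ i ∈ I, i < m :=
    fun i hi => Nat.lt_succ_of_le (Finset.le_sup (f := id) (Finset.mem_union_left _ hi))
  have hJm : ∀ i ∈ J, i < m :=
    fun i hi => Nat.lt_succ_of_le (Finset.le_sup (f := id) (Finset.mem_union_right _ hi))
  refine ⟨m, fun q h1 h2 => ?_⟩
  have hq : (q.1, q.2) ∈ U ×ˢ V := by
    constructor
    · apply hIsub
      intro i hi
      rw [h1 i (hIm i hi)]
      exact (hIu i hi).2
    · apply hJsub
      intro i hi
      rw [h2 i (hJm i hi)]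
      exact (hJv i hi).2
  exact hUV hq

/-- Every closed subset of `(ℕ → ℕ) × (ℕ → ℕ)` is coded by some `x₀`. -/
lemma exists_code {F : Set ((ℕ → ℕ) × (ℕ → ℕ))} (hF : IsClosed F) :
    ∃ x₀ : ℕ → ℕ, ∀ p : (ℕ → ℕ) × (ℕ → ℕ), (∀ n, p ∉ sdBox n (x₀ n)) ↔ p ∈ F := by
  classical
  set x₀ : ℕ → ℕ := fun n =>
    if sdBox n (Nat.unpair n).1 ⊆ Fᶜ then (Nat.unpair n).1 else sdDummy n with hx₀
  refine ⟨x₀, fun p => ?_⟩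
  constructor
  · -- if p avoids all coded boxes then p ∈ F
    intro h
    by_contra hpF
    have hpO : p ∈ Fᶜ := hpF
    obtain ⟨m, hm⟩ := exists_cylinder hF.isOpen_compl hpO
    set kp : ℕ := Encodable.encode
      ((List.ofFn (fun i : Fin m => p.1 i), List.ofFn (fun i : Fin m => p.2 i)) :
        List ℕ × List ℕ) with hkp
    set n := Nat.pair kp m with hn
    have hunp : (Nat.unpair n).1 = kp := by rw [hn, Nat.unpair_pair]
    have hmn : m ≤ n := Nat.right_le_pair _ _
    have hpbox : p ∈ sdBox n kp := by
      refine ⟨?_, ?_, ?_, ?_⟩ <;>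
        simp only [hkp, Denumerable.ofNat_encode, List.length_ofFn]
      · exact hmn
      · exact hmn
      · intro i hi
        rw [List.getD_eq_getElem _ _ (by simpa using hi), List.getElem_ofFn]
      · intro i hi
        rw [List.getD_eq_getElem _ _ (by simpa using hi), List.getElem_ofFn]
    have hboxsub : sdBox n kp ⊆ Fᶜ := by
      intro q hq
      obtain ⟨ha, hb, hc, hd⟩ := hq
      apply hm
      · intro i hi
        have := hc i (by simpa [hkp, Denumerable.ofNat_encode, List.length_ofFn] using hi)
        rw [this]
        simp only [hkp, Denumerable.ofNat_encode]
        rw [List.getD_eq_getElem _ _ (by simpa using hi), List.getElem_ofFn]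
      · intro i hi
        have := hd i (by simpa [hkp, Denumerable.ofNat_encode, List.length_ofFn] using hi)
        rw [this]
        simp only [hkp, Denumerable.ofNat_encode]
        rw [List.getD_eq_getElem _ _ (by simpa using hi), List.getElem_ofFn]
    have hx₀n : x₀ n = kp := by
      show (if sdBox n (Nat.unpair n).1 ⊆ Fᶜ then (Nat.unpair n).1 else sdDummy n) = kp
      rw [hunp, if_pos (hunp ▸ hboxsub)]
    exact h n (by rw [hx₀n]; exact hpbox)
  · -- if p ∈ F then p avoids all coded boxes
    intro hp n hbox
    by_cases hcase : sdBox n (Nat.unpair n).1 ⊆ Fᶜ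
    · have hxe : x₀ n = (Nat.unpair n).1 := by
        show (if sdBox n (Nat.unpair n).1 ⊆ Fᶜ then (Nat.unpair n).1 else sdDummy n) = _
        rw [if_pos hcase]
      rw [hxe] at hbox
      exact hcase hbox hp
    · have hxe : x₀ n = sdDummy n := by
        show (if sdBox n (Nat.unpair n).1 ⊆ Fᶜ then (Nat.unpair n).1 else sdDummy n) = _
        rw [if_neg hcase]
      rw [hxe, sdBox_dummy] at hbox
      exact hbox

end Coding
section Diagonal

open Set

lemma sd_diagonal {A : Set (ℕ → ℕ)}
    (hA : ∀ x : ℕ → ℕ, x ∈ A ↔ ∀ z : ℕ → ℕ, ∃ n, ((x, z) : (ℕ → ℕ) × (ℕ → ℕ)) ∈ sdBox n (x n))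
    (hAn : MeasureTheory.AnalyticSet A) : False := by
  obtain ⟨F, hFclosed, hFproj⟩ : ∃ F : Set ((ℕ → ℕ) × (ℕ → ℕ)), IsClosed F ∧
      ∀ x : ℕ → ℕ, (∃ z : ℕ → ℕ, ((x, z) : (ℕ → ℕ) × (ℕ → ℕ)) ∈ F) ↔ x ∈ A := by
    rw [MeasureTheory.AnalyticSet] at hAn
    rcases hAn with h | ⟨f, hf, hrange⟩
    · exact ⟨∅, isClosed_empty, fun x => by simp [h]⟩
    · refine ⟨{p : (ℕ → ℕ) × (ℕ → ℕ) | f p.2 = p.1},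
        isClosed_eq (hf.comp continuous_snd) continuous_fst, fun x => ?_⟩
      rw [← hrange]
      constructor
      · rintro ⟨z, hz⟩; exact ⟨z, hz⟩
      · rintro ⟨z, hz⟩; exact ⟨z, hz⟩
  obtain ⟨x₀, hx₀⟩ := exists_code hFclosed
  have hiff : (∀ z : ℕ → ℕ, ∃ n, ((x₀, z) : (ℕ → ℕ) × (ℕ → ℕ)) ∈ sdBox n (x₀ n)) ↔
      ¬ (∃ z : ℕ → ℕ, ((x₀, z) : (ℕ → ℕ) × (ℕ → ℕ)) ∈ F) := by
    constructor
    · rintro h ⟨z, hz⟩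
      obtain ⟨n, hn⟩ := h z
      exact (hx₀ (x₀, z)).2 hz n hn
    · intro h z
      by_contra hn
      push_neg at hn
      exact h ⟨z, (hx₀ (x₀, z)).1 hn⟩
  have hA1 := hA x₀
  have hF1 := hFproj x₀
  tauto

open scoped Classical in
/-- The bit indicating whether `(x,z)` belongs to the `n`-th coded box. -/
noncomputable def sdBit (x z : ℕ → ℕ) (n : ℕ) : ℝ :=
  if ((x, z) : (ℕ → ℕ) × (ℕ → ℕ)) ∈ sdBox n (x n) then 1 else 0

/-- The coefficient attached to `(x, z)`. -/
noncomputable def sdCo (x z : ℕ → ℕ) : ℝ := ∑' n, (1/4:ℝ)^n * sdBit x z n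

lemma sdBit_mem (x z : ℕ → ℕ) (n : ℕ) : sdBit x z n ∈ Set.Icc (0:ℝ) 1 := by
  rw [sdBit]
  split_ifs <;> constructor <;> norm_num

lemma sdCo_bound (x z : ℕ → ℕ) (n : ℕ) : ‖(1/4:ℝ)^n * sdBit x z n‖ ≤ (1/4:ℝ)^n := by
  obtain ⟨h1, h2⟩ := sdBit_mem x z n
  rw [Real.norm_eq_abs, abs_mul, abs_of_nonneg (by positivity : (0:ℝ) ≤ (1/4:ℝ)^n),
    abs_of_nonneg h1]
  nlinarith [pow_pos (by norm_num : (0:ℝ) < 1/4) n]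

lemma sdCo_summable (x z : ℕ → ℕ) : Summable (fun n => (1/4:ℝ)^n * sdBit x z n) := by
  apply Summable.of_norm_bounded
    (show Summable (fun k : ℕ => (1/4:ℝ)^k) from
      summable_geometric_of_lt_one (by norm_num) (by norm_num))
  exact fun n => sdCo_bound x z n

lemma sdCo_nonneg (x z : ℕ → ℕ) : 0 ≤ sdCo x z :=
  tsum_nonneg fun n => mul_nonneg (by positivity) (sdBit_mem x z n).1

lemma sdCo_le_two (x z : ℕ → ℕ) : sdCo x z ≤ 2 := by
  have h1 : sdCo x z ≤ ∑' n : ℕ, (1/4:ℝ)^n := by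
    apply Summable.tsum_le_tsum _ (sdCo_summable x z)
      (summable_geometric_of_lt_one (by norm_num) (by norm_num))
    intro n
    have := sdCo_bound x z n
    rw [Real.norm_eq_abs] at this
    exact (le_abs_self _).trans this
  rw [tsum_geometric_of_lt_one (by norm_num) (by norm_num)] at h1
  norm_num at h1
  linarith

lemma sdCo_eq_zero_iff (x z : ℕ → ℕ) :
    sdCo x z = 0 ↔ ∀ n, ((x, z) : (ℕ → ℕ) × (ℕ → ℕ)) ∉ sdBox n (x n) := by
  constructor
  · intro h n hmem
    have hbit : sdBit x z n = 1 := by rw [sdBit, if_pos hmem]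
    have h2 : (1/4:ℝ)^n * sdBit x z n ≤ sdCo x z := by
      apply Summable.le_tsum (sdCo_summable x z) n
      intro j _
      exact mul_nonneg (by positivity) (sdBit_mem x z j).1
    rw [hbit, h] at h2
    have : (0:ℝ) < (1/4:ℝ)^n := by positivity
    linarith
  · intro h
    rw [sdCo]
    have : ∀ n : ℕ, (1/4:ℝ)^n * sdBit x z n = 0 := by
      intro n
      rw [sdBit, if_neg (h n), mul_zero]
    rw [tsum_congr this, tsum_zero]

lemma sdBit_local {x x' z : ℕ → ℕ} {N : ℕ} (h : ∀ i, i < N → x i = x' i) :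
    ∀ n, n < N → sdBit x z n = sdBit x' z n := by
  intro n hn
  have hxn : x n = x' n := h n hn
  have hmem : (((x, z) : (ℕ → ℕ) × (ℕ → ℕ)) ∈ sdBox n (x n)) ↔
      (((x', z) : (ℕ → ℕ) × (ℕ → ℕ)) ∈ sdBox n (x n)) := by
    apply sdBox_local
    · intro i hi
      exact h i (lt_trans hi hn)
    · intro i _
      rfl
  rw [sdBit, sdBit, ← hxn]
  split_ifs with h1 h2 h2
  · rfl
  · exact absurd (hmem.1 h1) h2
  · exact absurd (hmem.2 h2) h1
  · rfl

lemma sdCo_local {x x' z : ℕ → ℕ} {N : ℕ} (h : ∀ i, i < N → x i = x' i) :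
    |sdCo x z - sdCo x' z| ≤ 3 * (1/4:ℝ)^N := by
  have hsplit : ∀ w : ℕ → ℕ, sdCo w z = (∑ m ∈ Finset.range N, (1/4:ℝ)^m * sdBit w z m) +
      ∑' k, (1/4:ℝ)^(k+N) * sdBit w z (k+N) := by
    intro w
    have hs := Summable.sum_add_tsum_nat_add N (sdCo_summable w z)
    simpa [sdCo] using hs.symm
  have htail : ∀ w : ℕ → ℕ, |∑' k, (1/4:ℝ)^(k+N) * sdBit w z (k+N)| ≤ (4/3) * (1/4:ℝ)^N := by
    intro w
    have hsumm : Summable (fun k => (1/4:ℝ)^(k+N) * sdBit w z (k+N)) := by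
      apply Summable.of_norm_bounded
        (show Summable (fun k : ℕ => (1/4:ℝ)^k) from
          summable_geometric_of_lt_one (by norm_num) (by norm_num))
      intro k
      refine (sdCo_bound w z (k+N)).trans ?_
      exact pow_le_pow_of_le_one (by norm_num) (by norm_num) (by omega)
    have hgeo : Summable (fun k : ℕ => (1/4:ℝ)^(k+N)) := by
      apply Summable.of_norm_bounded
        (show Summable (fun k : ℕ => (1/4:ℝ)^k) from
          summable_geometric_of_lt_one (by norm_num) (by norm_num))
      intro k
      rw [Real.norm_eq_abs, abs_of_nonneg (by positivity : (0:ℝ) ≤ (1/4:ℝ)^(k+N))]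
      exact pow_le_pow_of_le_one (by norm_num) (by norm_num) (by omega)
    rw [← Real.norm_eq_abs]
    refine (norm_tsum_le_tsum_norm hsumm.norm).trans ?_
    refine (Summable.tsum_le_tsum (fun k => sdCo_bound w z (k+N)) hsumm.norm hgeo).trans ?_
    have heq : ∑' k : ℕ, (1/4:ℝ)^(k+N) = (1/4:ℝ)^N * (4/3) := by
      have h11 : ∀ k : ℕ, (1/4:ℝ)^(k+N) = (1/4:ℝ)^N * (1/4:ℝ)^k := by
        intro k; rw [pow_add]; ring
      rw [tsum_congr h11, tsum_mul_left, tsum_geometric_of_lt_one (by norm_num) (by norm_num)]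
      norm_num
    rw [heq]
    linarith [pow_pos (show (0:ℝ) < 1/4 by norm_num) N]
  have hhead : ∑ m ∈ Finset.range N, (1/4:ℝ)^m * sdBit x z m =
      ∑ m ∈ Finset.range N, (1/4:ℝ)^m * sdBit x' z m := by
    apply Finset.sum_congr rfl
    intro m hm
    rw [Finset.mem_range] at hm
    rw [sdBit_local h m hm]
  have e1 := hsplit x
  have e2 := hsplit x'
  have h1 := htail x
  have h2 := htail x'
  rw [abs_le] at h1 h2 ⊢
  constructor <;> [skip; skip] <;>
    · rw [e1, e2, hhead]; push_cast; nlinarith [h1.1, h1.2, h2.1, h2.2,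
        pow_pos (show (0:ℝ) < 1/4 by norm_num) N]

end Diagonal

section Bridge

open Set Metric

variable {S : Type*} [MetricSpace S]

lemma sd_dist_def (p q : SumDiscreteProd S) :
    dist p q = dist p.fst q.fst + (if p.snd = q.snd then 0 else 1) := rfl

lemma sd_snd_eq_of_dist_lt {p q : SumDiscreteProd S} (h : dist p q < 1) : p.snd = q.snd := by
  by_contra hne
  rw [sd_dist_def, if_neg hne] at h
  linarith [dist_nonneg (x := p.fst) (y := q.fst)]

lemma sd_dist_slice (a b : S) (α : ℝ) :
    dist (⟨a, α⟩ : SumDiscreteProd S) ⟨b, α⟩ = dist a b := by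
  rw [sd_dist_def, if_pos rfl, add_zero]

lemma sd_dist_fst_le (p q : SumDiscreteProd S) : dist p.fst q.fst ≤ dist p q := by
  rw [sd_dist_def]
  split_ifs <;> linarith

lemma sd_F_continuous {g : S → ℝ} (hg : Continuous g) {co : ℝ → ℝ} (hco : ∀ α, |co α| ≤ 2) :
    Continuous fun p : SumDiscreteProd S => co p.snd * g p.fst := by
  rw [Metric.continuous_iff]
  intro p ε εpos
  obtain ⟨δ₁, δ₁pos, hδ₁⟩ := Metric.continuous_iff.1 hg p.fst (ε/3) (by linarith)
  refine ⟨min δ₁ (1/2), lt_min δ₁pos (by norm_num), fun q hq => ?_⟩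
  have hsnd : q.snd = p.snd :=
    sd_snd_eq_of_dist_lt (lt_of_lt_of_le hq ((min_le_right _ _).trans (by norm_num)))
  have hfst : dist q.fst p.fst < δ₁ :=
    lt_of_le_of_lt (sd_dist_fst_le q p) (lt_of_lt_of_le hq (min_le_left _ _))
  have hgd := hδ₁ q.fst hfst
  rw [Real.dist_eq] at hgd ⊢
  rw [hsnd, ← mul_sub, abs_mul]
  calc |co p.snd| * |g q.fst - g p.fst| ≤ 2 * |g q.fst - g p.fst| :=
        mul_le_mul_of_nonneg_right (hco p.snd) (abs_nonneg _)
    _ < ε := by nlinarith [abs_nonneg (g q.fst - g p.fst)]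

/-- Build a bounded continuous function on `SumDiscreteProd S` of the form
`(s, α) ↦ co α * g s`. -/
noncomputable def sdMk (co : ℝ → ℝ) (g : S → ℝ) (hg : Continuous g) (hgb : ∀ t, |g t| ≤ 2)
    (hco : ∀ α, |co α| ≤ 2) : BoundedContinuousFunction (SumDiscreteProd S) ℝ :=
  BoundedContinuousFunction.ofNormedAddCommGroup (fun p => co p.snd * g p.fst)
    (sd_F_continuous hg hco) 4 (fun p => by
      rw [Real.norm_eq_abs, abs_mul]
      calc |co p.snd| * |g p.fst| ≤ 2 * 2 :=
            mul_le_mul (hco p.snd) (hgb p.fst) (abs_nonneg _) (by norm_num)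
        _ = 4 := by norm_num)

lemma sdMk_apply (co : ℝ → ℝ) (g : S → ℝ) (hg : Continuous g) (hgb : ∀ t, |g t| ≤ 2)
    (hco : ∀ α, |co α| ≤ 2) (p : SumDiscreteProd S) :
    sdMk co g hg hgb hco p = co p.snd * g p.fst := rfl

lemma sdMk_mem_iff [Nonempty S] (hnlc : ∀ s : S, ¬ ∃ K ∈ nhds s, IsCompact K)
    (co : ℝ → ℝ) (hco : ∀ α, |co α| ≤ 2) :
    (sdMk co (sdH hnlc) (sdH_continuous hnlc) (sdH_bound hnlc) hco ∈
      {f : BoundedContinuousFunction (SumDiscreteProd S) ℝ |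
        ∀ x : SumDiscreteProd S,
          ¬ ∃ U ∈ nhds x, UniformContinuousOn (f : SumDiscreteProd S → ℝ) U}) ↔
    ∀ α : ℝ, co α ≠ 0 := by
  constructor
  · -- if the function is nowhere locally UC, every coefficient is nonzero
    intro hmem
    by_contra hc
    push_neg at hc
    obtain ⟨α₀, hα₀⟩ := hc
    obtain ⟨s₀⟩ := (inferInstance : Nonempty S)
    apply hmem ⟨s₀, α₀⟩
    refine ⟨ball (⟨s₀, α₀⟩ : SumDiscreteProd S) (1/2),
      ball_mem_nhds _ (by norm_num), ?_⟩
    rw [Metric.uniformContinuousOn_iff]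
    intro ε εpos
    refine ⟨1, one_pos, fun p hp q hq _ => ?_⟩
    have hps : p.snd = α₀ :=
      sd_snd_eq_of_dist_lt (lt_trans (mem_ball.1 hp) (by norm_num))
    have hqs : q.snd = α₀ :=
      sd_snd_eq_of_dist_lt (lt_trans (mem_ball.1 hq) (by norm_num))
    have h1 : (sdMk co (sdH hnlc) (sdH_continuous hnlc) (sdH_bound hnlc) hco) p = 0 := by
      rw [sdMk_apply, hps, hα₀, zero_mul]
    have h2 : (sdMk co (sdH hnlc) (sdH_continuous hnlc) (sdH_bound hnlc) hco) q = 0 := by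
      rw [sdMk_apply, hqs, hα₀, zero_mul]
    rw [h1, h2, dist_self]
    exact εpos
  · -- if every coefficient is nonzero, the function is nowhere locally UC
    intro hall x hex
    obtain ⟨U, hU, hUC⟩ := hex
    obtain ⟨r0, hr0, hballU⟩ := Metric.mem_nhds_iff.1 hU
    set r := min r0 (1/2) with hrdef
    have hrpos : 0 < r := lt_min hr0 (by norm_num)
    have hballU' : ball x r ⊆ U := fun y hy => hballU (mem_ball.2
      (lt_of_lt_of_le (mem_ball.1 hy) (min_le_left _ _)))
    apply sdH_nluc hnlc x.fst hrpos (hall x.snd)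
    rw [Metric.uniformContinuousOn_iff] at hUC ⊢
    intro ε εpos
    obtain ⟨δ, δpos, hδ⟩ := hUC ε εpos
    refine ⟨δ, δpos, fun a ha b hb hab => ?_⟩
    have haX : (⟨a, x.snd⟩ : SumDiscreteProd S) ∈ U := by
      apply hballU'
      rw [mem_ball]
      show dist (⟨a, x.snd⟩ : SumDiscreteProd S) x < r
      have : dist (⟨a, x.snd⟩ : SumDiscreteProd S) x = dist a x.fst := by
        rw [sd_dist_def, if_pos rfl, add_zero]
      rw [this]
      exact mem_ball.1 ha
    have hbX : (⟨b, x.snd⟩ : SumDiscreteProd S) ∈ U := by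
      apply hballU'
      rw [mem_ball]
      show dist (⟨b, x.snd⟩ : SumDiscreteProd S) x < r
      have : dist (⟨b, x.snd⟩ : SumDiscreteProd S) x = dist b x.fst := by
        rw [sd_dist_def, if_pos rfl, add_zero]
      rw [this]
      exact mem_ball.1 hb
    have hd : dist (⟨a, x.snd⟩ : SumDiscreteProd S) ⟨b, x.snd⟩ < δ := by
      rw [sd_dist_slice]
      exact hab
    have := hδ ⟨a, x.snd⟩ haX ⟨b, x.snd⟩ hbX hd
    simpa [sdMk_apply] using this

end Bridge
/-- For `S` a nonempty, nowhere locally compact metric space and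
`X = S × ℝ` with the metric `d((s₁,α₁),(s₂,α₂)) = d_S(s₁,s₂) + d_d(α₁,α₂)` (`d_d` being the
discrete metric on `ℝ`), the set of bounded continuous, nowhere locally uniformly continuous
real-valued functions on `X` is not a Borel subset of `C_b(X)` with the supremum norm. -/
theorem not_borel_nowhereLocallyUniformlyContinuous_sumDiscreteProd
    {S : Type*} [MetricSpace S] [Nonempty S]
    (hnlc : ∀ s : S, ¬ ∃ K ∈ nhds s, IsCompact K) :
    ¬ MeasurableSet[borel (BoundedContinuousFunction (SumDiscreteProd S) ℝ)]
      {f : BoundedContinuousFunction (SumDiscreteProd S) ℝ |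
        ∀ x : SumDiscreteProd S,
          ¬ ∃ U ∈ nhds x, UniformContinuousOn (f : SumDiscreteProd S → ℝ) U} := by
  classical
  intro hBorel
  obtain ⟨emb⟩ : Nonempty ((ℕ → ℕ) ↪ ℝ) := by
    rw [← Cardinal.le_def, Cardinal.mk_real]
    have h1 : Cardinal.mk (ℕ → ℕ) = Cardinal.aleph0 ^ Cardinal.aleph0 := by
      simp [Cardinal.mk_arrow]
    rw [h1, Cardinal.aleph0_power_aleph0]
  set co : (ℕ → ℕ) → ℝ → ℝ := fun x α =>
    if h : ∃ z : ℕ → ℕ, emb z = α then sdCo x h.choose else 1 with hco_def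
  have hco_bound : ∀ (x : ℕ → ℕ) (α : ℝ), |co x α| ≤ 2 := by
    intro x α
    show |if h : ∃ z : ℕ → ℕ, emb z = α then sdCo x h.choose else 1| ≤ 2
    split_ifs with h
    · rw [abs_of_nonneg (sdCo_nonneg _ _)]
      exact sdCo_le_two _ _
    · norm_num
  have hco_emb : ∀ (x z : ℕ → ℕ), co x (emb z) = sdCo x z := by
    intro x z
    have h : ∃ z' : ℕ → ℕ, emb z' = emb z := ⟨z, rfl⟩
    have hch : h.choose = z := emb.injective h.choose_spec
    show (if h' : ∃ z' : ℕ → ℕ, emb z' = emb z then sdCo x h'.choose else 1) = sdCo x z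
    rw [dif_pos h, hch]
  set Φ : (ℕ → ℕ) → BoundedContinuousFunction (SumDiscreteProd S) ℝ := fun x =>
    sdMk (co x) (sdH hnlc) (sdH_continuous hnlc) (sdH_bound hnlc) (hco_bound x) with hΦdef
  have hΦmem : ∀ x : ℕ → ℕ,
      Φ x ∈ {f : BoundedContinuousFunction (SumDiscreteProd S) ℝ |
        ∀ p : SumDiscreteProd S,
          ¬ ∃ U ∈ nhds p, UniformContinuousOn (f : SumDiscreteProd S → ℝ) U} ↔
      (∀ z : ℕ → ℕ, ∃ n, ((x, z) : (ℕ → ℕ) × (ℕ → ℕ)) ∈ sdBox n (x n)) := by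
    intro x
    rw [show Φ x = sdMk (co x) (sdH hnlc) (sdH_continuous hnlc) (sdH_bound hnlc) (hco_bound x)
      from rfl]
    rw [sdMk_mem_iff hnlc (co x) (hco_bound x)]
    constructor
    · intro h z
      have h2 := h (emb z)
      rw [hco_emb x z] at h2
      by_contra hno
      push_neg at hno
      exact h2 ((sdCo_eq_zero_iff x z).2 hno)
    · intro h α
      show (if h' : ∃ z : ℕ → ℕ, emb z = α then sdCo x h'.choose else 1) ≠ 0
      split_ifs with hz
      · intro h0
        obtain ⟨n, hn⟩ := h hz.choose
        rw [sdCo_eq_zero_iff] at h0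
        exact h0 n hn
      · norm_num
  have hΦcont : Continuous Φ := by
    rw [continuous_iff_continuousAt]
    intro x
    rw [ContinuousAt, Metric.tendsto_nhds]
    intro ε εpos
    obtain ⟨N, hN⟩ : ∃ N : ℕ, (1/4:ℝ)^N < ε/7 :=
      exists_pow_lt_of_lt_one (by linarith) (by norm_num)
    have hVopen : IsOpen (⋂ i ∈ Finset.range N, {x' : ℕ → ℕ | x' i = x i}) :=
      isOpen_biInter_finset fun i _ =>
        (show IsOpen ((fun x' : ℕ → ℕ => x' i) ⁻¹' {x i}) from
          IsOpen.preimage (continuous_apply i) (isOpen_discrete _))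
    have hVmem : (⋂ i ∈ Finset.range N, {x' : ℕ → ℕ | x' i = x i}) ∈ nhds x :=
      hVopen.mem_nhds (by simp)
    filter_upwards [hVmem] with x' hx'
    have hagree : ∀ i, i < N → x' i = x i := by
      intro i hi
      exact Set.mem_iInter₂.1 hx' i (Finset.mem_range.2 hi)
    have hdist : dist (Φ x') (Φ x) ≤ 6 * (1/4:ℝ)^N := by
      rw [BoundedContinuousFunction.dist_le (by positivity)]
      intro p
      show dist (co x' p.snd * sdH hnlc p.fst) (co x p.snd * sdH hnlc p.fst) ≤ _
      rw [Real.dist_eq, ← sub_mul, abs_mul]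
      have h1 : |co x' p.snd - co x p.snd| ≤ 3 * (1/4:ℝ)^N := by
        show |(if h : ∃ z : ℕ → ℕ, emb z = p.snd then sdCo x' h.choose else 1) -
          (if h : ∃ z : ℕ → ℕ, emb z = p.snd then sdCo x h.choose else 1)| ≤ 3 * (1/4:ℝ)^N
        split_ifs with h
        · exact sdCo_local hagree
        · simp only [sub_self, abs_zero]
          positivity
      have h2 : |sdH hnlc p.fst| ≤ 2 := sdH_bound hnlc p.fst
      calc |co x' p.snd - co x p.snd| * |sdH hnlc p.fst| ≤ (3 * (1/4:ℝ)^N) * 2 :=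
            mul_le_mul h1 h2 (abs_nonneg _) (by positivity)
        _ = 6 * (1/4:ℝ)^N := by ring
    calc dist (Φ x') (Φ x) ≤ 6 * (1/4:ℝ)^N := hdist
      _ < ε := by linarith
  letI : MeasurableSpace (BoundedContinuousFunction (SumDiscreteProd S) ℝ) :=
    borel (BoundedContinuousFunction (SumDiscreteProd S) ℝ)
  haveI : BorelSpace (BoundedContinuousFunction (SumDiscreteProd S) ℝ) := ⟨rfl⟩
  have hmeas : MeasurableSet (Φ ⁻¹'
      {f : BoundedContinuousFunction (SumDiscreteProd S) ℝ |
        ∀ p : SumDiscreteProd S,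
          ¬ ∃ U ∈ nhds p, UniformContinuousOn (f : SumDiscreteProd S → ℝ) U}) :=
    hΦcont.measurable hBorel
  have hpre : Φ ⁻¹'
      {f : BoundedContinuousFunction (SumDiscreteProd S) ℝ |
        ∀ p : SumDiscreteProd S,
          ¬ ∃ U ∈ nhds p, UniformContinuousOn (f : SumDiscreteProd S → ℝ) U} =
      {x : ℕ → ℕ | ∀ z : ℕ → ℕ, ∃ n, ((x, z) : (ℕ → ℕ) × (ℕ → ℕ)) ∈ sdBox n (x n)} :=
    Set.ext fun x => hΦmem x
  rw [hpre] at hmeas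
  exact sd_diagonal (fun x => Iff.rfl) hmeas.analyticSet
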